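/- For fixed t with 0 < t < 1, the function (α₁,...,αₙ) ↦ Σᵢ αᵢ·t^(αᵢ-1)/(1-t^(αᵢ)) is Schur-convex on (0,∞)ⁿ: if (α₁,...,αₙ) majorizes (α₁*,...,αₙ*), then Σᵢ αᵢ·t^(αᵢ-1)/(1-t^(αᵢ)) ≥ Σᵢ αᵢ*·t^(αᵢ*-1)/(1-t^(αᵢ*)). -/

import Mathlib

open Real Set Finset


noncomputable def gB (x : ℝ) : ℝ := x / (Real.exp x - 1)
noncomputable def gB1 (x : ℝ) : ℝ :=
  (Real.exp x - 1 - x * Real.exp x) / (Real.exp x - 1) ^ 2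
noncomputable def gB2 (x : ℝ) : ℝ :=
  (Real.exp x * ((x - 2) * Real.exp x + (x + 2))) / (Real.exp x - 1) ^ 3

lemma exp_sub_one_pos {x : ℝ} (hx : 0 < x) : 0 < Real.exp x - 1 := by
  have := Real.add_one_lt_exp (ne_of_gt hx)
  linarith

lemma hasDerivAt_gB {x : ℝ} (hx : 0 < x) : HasDerivAt gB (gB1 x) x := by
  have hd : Real.exp x - 1 ≠ 0 := ne_of_gt (exp_sub_one_pos hx)
  have h2 : HasDerivAt (fun y => Real.exp y - 1) (Real.exp x) x :=
    (Real.hasDerivAt_exp x).sub_const 1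
  have := (hasDerivAt_id x).div h2 hd
  refine this.congr_deriv ?_
  unfold gB1; simp only [id]; ring

lemma hasDerivAt_gB1 {x : ℝ} (hx : 0 < x) : HasDerivAt gB1 (gB2 x) x := by
  have hd : Real.exp x - 1 ≠ 0 := ne_of_gt (exp_sub_one_pos hx)
  have hN : HasDerivAt (fun y => Real.exp y - 1 - y * Real.exp y)
      (Real.exp x - (1 * Real.exp x + x * Real.exp x)) x :=
    ((Real.hasDerivAt_exp x).sub_const 1).sub ((hasDerivAt_id x).mul (Real.hasDerivAt_exp x))
  have hD : HasDerivAt (fun y => (Real.exp y - 1) ^ 2)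
      (2 * (Real.exp x - 1) ^ 1 * Real.exp x) x :=
    ((Real.hasDerivAt_exp x).sub_const 1).pow 2
  have hd2 : (Real.exp x - 1) ^ 2 ≠ 0 := pow_ne_zero _ hd
  have := hN.div hD hd2
  refine this.congr_deriv ?_
  unfold gB2
  field_simp
  ring

lemma auxh1 {x : ℝ} (hx : 0 ≤ x) : 0 ≤ (x - 1) * Real.exp x + 1 := by
  have H : ∀ y : ℝ, HasDerivAt (fun z => (z - 1) * Real.exp z + 1) (y * Real.exp y) y := by
    intro y
    have := (((hasDerivAt_id y).sub_const 1).mul (Real.hasDerivAt_exp y)).add_const 1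
    refine this.congr_deriv ?_
    simp only [id]; ring
  have mono : MonotoneOn (fun z => (z - 1) * Real.exp z + 1) (Ici (0:ℝ)) := by
    apply monotoneOn_of_deriv_nonneg (convex_Ici 0)
    · exact fun y _ => ((H y).continuousAt).continuousWithinAt
    · exact fun y _ => ((H y).differentiableAt).differentiableWithinAt
    · intro y hy
      rw [interior_Ici] at hy
      rw [(H y).deriv]
      exact mul_nonneg (le_of_lt hy) (le_of_lt (Real.exp_pos y))
  have := mono (self_mem_Ici) (mem_Ici.2 hx) hx
  simpa using this

lemma auxh2 {x : ℝ} (hx : 0 ≤ x) : 0 ≤ (x - 2) * Real.exp x + (x + 2) := by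
  have H : ∀ y : ℝ, HasDerivAt (fun z => (z - 2) * Real.exp z + (z + 2))
      ((y - 1) * Real.exp y + 1) y := by
    intro y
    have := (((hasDerivAt_id y).sub_const 2).mul (Real.hasDerivAt_exp y)).add
      ((hasDerivAt_id y).add_const 2)
    refine this.congr_deriv ?_
    simp only [id]; ring
  have mono : MonotoneOn (fun z => (z - 2) * Real.exp z + (z + 2)) (Ici (0:ℝ)) := by
    apply monotoneOn_of_deriv_nonneg (convex_Ici 0)
    · exact fun y _ => ((H y).continuousAt).continuousWithinAt
    · exact fun y _ => ((H y).differentiableAt).differentiableWithinAt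
    · intro y hy
      rw [interior_Ici] at hy
      rw [(H y).deriv]
      exact auxh1 (le_of_lt hy)
  have := mono (self_mem_Ici) (mem_Ici.2 hx) hx
  simpa using this

lemma gB1_mono : MonotoneOn gB1 (Ioi (0:ℝ)) := by
  apply monotoneOn_of_deriv_nonneg (convex_Ioi 0)
  · exact fun y hy => ((hasDerivAt_gB1 hy).continuousAt).continuousWithinAt
  · intro y hy
    rw [interior_Ioi] at hy
    exact ((hasDerivAt_gB1 hy).differentiableAt).differentiableWithinAt
  · intro y hy
    rw [interior_Ioi] at hy
    rw [(hasDerivAt_gB1 hy).deriv]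
    unfold gB2
    have h1 := exp_sub_one_pos hy
    have h2 := auxh2 (le_of_lt hy)
    positivity

lemma gB_tangent {x y : ℝ} (hx : 0 < x) (hy : 0 < y) :
    gB y + gB1 y * (x - y) ≤ gB x := by
  rcases lt_trichotomy x y with h | h | h
  · obtain ⟨c, hc, hceq⟩ := exists_hasDerivAt_eq_slope gB gB1 h
      (fun z hz => ((hasDerivAt_gB (lt_of_lt_of_le hx hz.1)).continuousAt).continuousWithinAt)
      (fun z hz => hasDerivAt_gB (lt_trans hx hz.1))
    have hc0 : 0 < c := lt_trans hx hc.1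
    have hmono : gB1 c ≤ gB1 y := gB1_mono (mem_Ioi.2 hc0) (mem_Ioi.2 hy) (le_of_lt hc.2)
    have : gB y - gB x = gB1 c * (y - x) := by
      rw [hceq, div_mul_cancel₀ _ (sub_ne_zero_of_ne (ne_of_gt h))]
    nlinarith [hc.2, hc.1]
  · subst h; simp
  · obtain ⟨c, hc, hceq⟩ := exists_hasDerivAt_eq_slope gB gB1 h
      (fun z hz => ((hasDerivAt_gB (lt_of_lt_of_le hy hz.1)).continuousAt).continuousWithinAt)
      (fun z hz => hasDerivAt_gB (lt_trans hy hz.1))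
    have hc0 : 0 < c := lt_trans hy hc.1
    have hmono : gB1 y ≤ gB1 c := gB1_mono (mem_Ioi.2 hy) (mem_Ioi.2 hc0) (le_of_lt hc.1)
    have : gB x - gB y = gB1 c * (x - y) := by
      rw [hceq, div_mul_cancel₀ _ (sub_ne_zero_of_ne (ne_of_gt h))]
    nlinarith [hc.1, hc.2]

lemma phi_eq {t : ℝ} (ht0 : 0 < t) (ht1 : t < 1) {x : ℝ} (hx : 0 < x) :
    x * t ^ (x - 1) / (1 - t ^ x) =
      (Real.exp (-Real.log t) / (-Real.log t)) * gB ((-Real.log t) * x) := by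
  set s := -Real.log t with hsdef
  have hs : 0 < s := by
    have := Real.log_neg ht0 ht1
    simp [hsdef]; linarith
  have hE : 0 < Real.exp (s * x) - 1 := exp_sub_one_pos (by positivity)
  have h1 : t ^ x = (Real.exp (s * x))⁻¹ := by
    rw [Real.rpow_def_of_pos ht0, ← Real.exp_neg]
    congr 1
    rw [hsdef]; ring
  have h2 : t ^ (x - 1) = (Real.exp (s * x))⁻¹ * Real.exp s := by
    rw [Real.rpow_def_of_pos ht0, ← Real.exp_neg, ← Real.exp_add]
    congr 1
    rw [hsdef]; ring
  rw [h1, h2]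
  unfold gB
  have hE0 : Real.exp (s * x) ≠ 0 := (Real.exp_pos _).ne'
  have hd1 : 1 - (Real.exp (s * x))⁻¹ ≠ 0 := by
    have : (Real.exp (s * x))⁻¹ < 1 := by
      rw [inv_lt_one_iff₀]; right; linarith
    linarith
  field_simp

/-- `Majorizes a b` : the vector `a` majorizes the vector `b`, i.e. for each `k`, the
sum of the `k` largest entries of `b` is at most that of `a` (expressed via subsets),
and the total sums agree. -/
def Majorizes {n : ℕ} (a b : Fin n → ℝ) : Prop :=
  (∀ s : Finset (Fin n), ∃ t : Finset (Fin n), t.card = s.card ∧ ∑ i ∈ s, b i ≤ ∑ i ∈ t, a i) ∧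
    ∑ i, a i = ∑ i, b i

lemma fin_le_strictMono {k n : ℕ} {v : Fin k → Fin n} (hv : StrictMono v) (j : Fin k) :
    (j : ℕ) ≤ (v j : ℕ) := by
  induction' hm : (j : ℕ) with m ih generalizing j
  · exact Nat.zero_le _
  · have hjk := j.isLt
    have hm' : m < k := by omega
    have h1 : (⟨m, hm'⟩ : Fin k) < j := by
      simp only [Fin.lt_def]; omega
    have h2 := hv h1
    have h3 := ih ⟨m, hm'⟩ rfl
    rw [Fin.lt_def] at h2
    omega

lemma sum_le_topk {n k : ℕ} (hk : k ≤ n) (A : Fin n → ℝ) (hA : Antitone A)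
    (S : Finset (Fin n)) (hS : S.card = k) :
    ∑ i ∈ S, A i ≤ ∑ j : Fin k, A (Fin.castLE hk j) := by
  have hSeq : S = Finset.image (S.orderEmbOfFin hS) Finset.univ := by
    ext x
    simp only [Finset.mem_image, Finset.mem_univ, true_and]
    constructor
    · intro hx
      have : x ∈ Set.range (S.orderEmbOfFin hS) := by
        rw [Finset.range_orderEmbOfFin]; exact hx
      obtain ⟨j, hj⟩ := this
      exact ⟨j, hj⟩
    · rintro ⟨j, rfl⟩
      exact Finset.orderEmbOfFin_mem S hS j
  rw [hSeq, Finset.sum_image (fun x _ y _ h => (S.orderEmbOfFin hS).injective h)]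
  apply Finset.sum_le_sum
  intro j _
  apply hA
  rw [Fin.le_def]
  exact fin_le_strictMono (S.orderEmbOfFin hS).strictMono j

lemma hlp {n : ℕ} (f m : ℝ → ℝ) (hm : MonotoneOn m (Set.Ioi 0))
    (htan : ∀ x, 0 < x → ∀ y, 0 < y → f y + m y * (x - y) ≤ f x)
    (a b : Fin n → ℝ) (ha : ∀ i, 0 < a i) (hb : ∀ i, 0 < b i)
    (hmaj : Majorizes a b) : ∑ i, f (b i) ≤ ∑ i, f (a i) := by
  rcases Nat.eq_zero_or_pos n with hn | hn
  · subst hn; simp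
  set σ := Tuple.sort (-a) with hσ
  set τ := Tuple.sort (-b) with hτ
  set A : Fin n → ℝ := a ∘ σ with hA
  set B : Fin n → ℝ := b ∘ τ with hB
  have hAanti : Antitone A := by
    intro i j hij
    have := Tuple.monotone_sort (-a) hij
    simpa [hA, hσ] using this
  have hBanti : Antitone B := by
    intro i j hij
    have := Tuple.monotone_sort (-b) hij
    simpa [hB, hτ] using this
  have hApos : ∀ i, 0 < A i := fun i => ha _
  have hBpos : ∀ i, 0 < B i := fun i => hb _
  -- partial sums inequality for k ≤ n
  have partial_le : ∀ k (hk : k ≤ n),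
      ∑ j : Fin k, B (Fin.castLE hk j) ≤ ∑ j : Fin k, A (Fin.castLE hk j) := by
    intro k hk
    have hinj : Function.Injective (fun j : Fin k => τ (Fin.castLE hk j)) :=
      τ.injective.comp (Fin.castLE_injective hk)
    set s : Finset (Fin n) := Finset.image (fun j : Fin k => τ (Fin.castLE hk j)) Finset.univ
      with hs
    have hscard : s.card = k := by
      rw [hs, Finset.card_image_of_injective _ hinj, Finset.card_univ, Fintype.card_fin]
    have hsum_s : ∑ i ∈ s, b i = ∑ j : Fin k, B (Fin.castLE hk j) := by
      rw [hs, Finset.sum_image (fun x _ y _ h => hinj h)]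
      rfl
    obtain ⟨T, hTcard, hT⟩ := hmaj.1 s
    rw [hscard] at hTcard
    have hTsum : ∑ i ∈ T, a i = ∑ i ∈ Finset.image (σ.symm) T, A i := by
      rw [Finset.sum_image (fun x _ y _ h => σ.symm.injective h)]
      apply Finset.sum_congr rfl
      intro i _
      simp [hA]
    have hTcard' : (Finset.image (σ.symm) T).card = k := by
      rw [Finset.card_image_of_injective _ σ.symm.injective, hTcard]
    calc ∑ j : Fin k, B (Fin.castLE hk j) = ∑ i ∈ s, b i := hsum_s.symm
      _ ≤ ∑ i ∈ T, a i := hT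
      _ = ∑ i ∈ Finset.image (σ.symm) T, A i := hTsum
      _ ≤ ∑ j : Fin k, A (Fin.castLE hk j) := sum_le_topk hk A hAanti _ hTcard'
  -- natural number indexed versions
  set A' : ℕ → ℝ := fun i => if h : i < n then A ⟨i, h⟩ else 0 with hA'
  set B' : ℕ → ℝ := fun i => if h : i < n then B ⟨i, h⟩ else 0 with hB'
  have hA'eq : ∀ (i : ℕ) (h : i < n), A' i = A ⟨i, h⟩ := fun i h => dif_pos h
  have hB'eq : ∀ (i : ℕ) (h : i < n), B' i = B ⟨i, h⟩ := fun i h => dif_pos h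
  have hA'0 : ∀ (i : ℕ), ¬ i < n → A' i = 0 := fun i h => dif_neg h
  have hB'0 : ∀ (i : ℕ), ¬ i < n → B' i = 0 := fun i h => dif_neg h
  have hrangeA : ∀ k (hk : k ≤ n), ∑ i ∈ Finset.range k, A' i = ∑ j : Fin k, A (Fin.castLE hk j) := by
    intro k hk
    rw [← Fin.sum_univ_eq_sum_range]
    apply Finset.sum_congr rfl
    intro j _
    rw [hA'eq _ (lt_of_lt_of_le j.isLt hk)]
    rfl
  have hrangeB : ∀ k (hk : k ≤ n), ∑ i ∈ Finset.range k, B' i = ∑ j : Fin k, B (Fin.castLE hk j) := by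
    intro k hk
    rw [← Fin.sum_univ_eq_sum_range]
    apply Finset.sum_congr rfl
    intro j _
    rw [hB'eq _ (lt_of_lt_of_le j.isLt hk)]
    rfl
  have hAtot : ∑ i ∈ Finset.range n, A' i = ∑ i, a i := by
    rw [hrangeA n le_rfl, ← Equiv.sum_comp σ a]
    apply Finset.sum_congr rfl
    intro j _
    rfl
  have hBtot : ∑ i ∈ Finset.range n, B' i = ∑ i, b i := by
    rw [hrangeB n le_rfl, ← Equiv.sum_comp τ b]
    apply Finset.sum_congr rfl
    intro j _
    rfl
  have heq : ∑ i ∈ Finset.range n, A' i = ∑ i ∈ Finset.range n, B' i := by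
    rw [hAtot, hBtot, hmaj.2]
  have hpartial : ∀ k, ∑ i ∈ Finset.range k, B' i ≤ ∑ i ∈ Finset.range k, A' i := by
    intro k
    rcases le_or_gt k n with hk | hk
    · rw [hrangeA k hk, hrangeB k hk]; exact partial_le k hk
    · have hsubA : ∑ i ∈ Finset.range k, A' i = ∑ i ∈ Finset.range n, A' i := by
        symm
        apply Finset.sum_subset (Finset.range_subset_range.2 (le_of_lt hk))
        intro x _ hx
        rw [Finset.mem_range, not_lt] at hx
        exact hA'0 x (by omega)
      have hsubB : ∑ i ∈ Finset.range k, B' i = ∑ i ∈ Finset.range n, B' i := by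
        symm
        apply Finset.sum_subset (Finset.range_subset_range.2 (le_of_lt hk))
        intro x _ hx
        rw [Finset.mem_range, not_lt] at hx
        exact hB'0 x (by omega)
      rw [hsubA, hsubB, heq]
  -- Abel summation
  set M : ℕ → ℝ := fun i => m (B' i) with hM
  set d : ℕ → ℝ := fun i => A' i - B' i with hd
  have habel : 0 ≤ ∑ i ∈ Finset.range n, M i * d i := by
    have hby := Finset.sum_range_by_parts M d n
    simp only [smul_eq_mul] at hby
    have hdn : ∑ i ∈ Finset.range n, d i = 0 := by
      simp only [hd, Finset.sum_sub_distrib, heq, sub_self]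
    rw [hby, hdn, mul_zero, zero_sub, neg_nonneg]
    apply Finset.sum_nonpos
    intro i hi
    rw [Finset.mem_range] at hi
    have hi1 : i + 1 < n := by omega
    have hin : i < n := by omega
    have hManti : M (i + 1) ≤ M i := by
      have hBi : B' (i + 1) ≤ B' i := by
        rw [hB'eq _ hi1, hB'eq _ hin]
        exact hBanti (by rw [Fin.le_def]; simp)
      have hp1 : (0:ℝ) < B' (i + 1) := by rw [hB'eq _ hi1]; exact hBpos _
      have hp2 : (0:ℝ) < B' i := by rw [hB'eq _ hin]; exact hBpos _
      exact hm (Set.mem_Ioi.2 hp1) (Set.mem_Ioi.2 hp2) hBi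
    have hD : 0 ≤ ∑ j ∈ Finset.range (i + 1), d j := by
      have := hpartial (i + 1)
      simp only [hd, Finset.sum_sub_distrib]
      linarith
    nlinarith
  have htansum : ∑ i ∈ Finset.range n, M i * d i ≤
      ∑ i ∈ Finset.range n, (f (A' i) - f (B' i)) := by
    apply Finset.sum_le_sum
    intro i hi
    rw [Finset.mem_range] at hi
    have hp1 : (0:ℝ) < A' i := by rw [hA'eq _ hi]; exact hApos _
    have hp2 : (0:ℝ) < B' i := by rw [hB'eq _ hi]; exact hBpos _
    have := htan (A' i) hp1 (B' i) hp2
    simp only [hM, hd]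
    linarith
  -- conclude
  have hfB : ∑ i, f (b i) = ∑ i ∈ Finset.range n, f (B' i) := by
    rw [← Equiv.sum_comp τ (fun i => f (b i)), ← Fin.sum_univ_eq_sum_range]
    apply Finset.sum_congr rfl
    intro j _
    rw [hB'eq _ j.isLt]
    rfl
  have hfA : ∑ i, f (a i) = ∑ i ∈ Finset.range n, f (A' i) := by
    rw [← Equiv.sum_comp σ (fun i => f (a i)), ← Fin.sum_univ_eq_sum_range]
    apply Finset.sum_congr rfl
    intro j _
    rw [hA'eq _ j.isLt]
    rfl
  rw [hfA, hfB]
  have := le_trans habel htansum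
  rw [Finset.sum_sub_distrib] at this
  linarith


theorem sum_varphi_schur_convex (n : ℕ) (t : ℝ) (ht0 : 0 < t) (ht1 : t < 1)
    (α α' : Fin n → ℝ) (hα : ∀ i, 0 < α i) (hα' : ∀ i, 0 < α' i)
    (hmaj : Majorizes α α') :
    ∑ i, α' i * t ^ (α' i - 1) / (1 - t ^ (α' i)) ≤
      ∑ i, α i * t ^ (α i - 1) / (1 - t ^ (α i)) := by
  set s : ℝ := -Real.log t with hsdef
  have hs : 0 < s := by
    have := Real.log_neg ht0 ht1
    rw [hsdef]; linarith
  have hpos : 0 < Real.exp s / s := div_pos (Real.exp_pos s) hs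
  set F : ℝ → ℝ := fun x => x * t ^ (x - 1) / (1 - t ^ x) with hF
  set M : ℝ → ℝ := fun y => Real.exp s * gB1 (s * y) with hM
  have hMmono : MonotoneOn M (Set.Ioi 0) := by
    intro y1 hy1 y2 hy2 h12
    have := gB1_mono (Set.mem_Ioi.2 (mul_pos hs (Set.mem_Ioi.1 hy1)))
      (Set.mem_Ioi.2 (mul_pos hs (Set.mem_Ioi.1 hy2)))
      (by nlinarith [Set.mem_Ioi.1 hy1] : s * y1 ≤ s * y2)
    exact mul_le_mul_of_nonneg_left this (le_of_lt (Real.exp_pos s))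
  have htan : ∀ x, 0 < x → ∀ y, 0 < y → F y + M y * (x - y) ≤ F x := by
    intro x hx y hy
    have hFx : F x = (Real.exp s / s) * gB (s * x) := by
      rw [hF]; exact phi_eq ht0 ht1 hx
    have hFy : F y = (Real.exp s / s) * gB (s * y) := by
      rw [hF]; exact phi_eq ht0 ht1 hy
    have key := gB_tangent (mul_pos hs hx) (mul_pos hs hy)
    have key2 := mul_le_mul_of_nonneg_left key (le_of_lt hpos)
    have hrw : (Real.exp s / s) * (gB (s * y) + gB1 (s * y) * (s * x - s * y)) =
        (Real.exp s / s) * gB (s * y) + Real.exp s * gB1 (s * y) * (x - y) := by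
      field_simp
    rw [hrw] at key2
    rw [hFx, hFy, hM]
    exact key2
  exact hlp F M hMmono htan α α' hα hα' hmaj
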